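/- Let γ : B → B' be a ring homomorphism, I ⊂ B and J ⊂ B' ideals with γ(I)B' a reduction of J, and let X' be the blow up of Spec(B') at J. Then γ(I)·𝒪_{X'} = J·𝒪_{X'}; in particular γ(I)·𝒪_{X'} is an invertible sheaf of ideals on X'. -/

import Mathlib

open AlgebraicGeometry CategoryTheory TopologicalSpace

/-- For a morphism `f : Y ⟶ Spec R` and an ideal `I ⊆ R`, the ideal `I·𝒪_{Y,y}` of the
stalk at `y` generated by the pullback of `I`. -/
noncomputable def pulledIdealAt (R : CommRingCat) (I : Ideal R) {Y : Scheme}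
    (f : Y ⟶ Spec R) (y : Y) : Ideal (Y.presheaf.stalk y) :=
  I.map ((Scheme.ΓSpecIso R).inv ≫ f.appTop ≫ Y.presheaf.germ ⊤ y (Opens.mem_top y) :
    R ⟶ Y.presheaf.stalk y).hom

/-- `I·𝒪_Y` is an invertible sheaf of ideals: at every point the pulled back ideal of the
stalk is principal, generated by a nonzerodivisor. -/
def IsInvertiblePulledIdeal (R : CommRingCat) (I : Ideal R) {Y : Scheme}
    (f : Y ⟶ Spec R) : Prop :=
  ∀ y : Y, ∃ a : Y.presheaf.stalk y,
    pulledIdealAt R I f y = Ideal.span {a} ∧ a ∈ nonZeroDivisors (Y.presheaf.stalk y)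

/-- `π : X ⟶ Spec R` is the blow up of `Spec R` at `I`: the pullback of `I` to `X` is an
invertible ideal sheaf, and `π` is universal with this property. -/
def IsBlowUp (R : CommRingCat) (I : Ideal R) {X : Scheme} (π : X ⟶ Spec R) : Prop :=
  IsInvertiblePulledIdeal R I π ∧
    ∀ {Y : Scheme} (f : Y ⟶ Spec R), IsInvertiblePulledIdeal R I f →
      ∃! g : Y ⟶ X, g ≫ π = f


/-- Cancellation of a principal ideal generated by a nonzerodivisor. -/
lemma ideal_cancel_span_singleton {R : Type*} [CommRing R] {s : R}
    (hs : s ∈ nonZeroDivisors R) {K L : Ideal R}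
    (h : K * Ideal.span {s} = L * Ideal.span {s}) : K = L := by
  have key : ∀ {K L : Ideal R}, K * Ideal.span {s} = L * Ideal.span {s} → K ≤ L := by
    intro K L h x hx
    have hxK : x * s ∈ K * Ideal.span {s} :=
      Ideal.mul_mem_mul hx (Ideal.mem_span_singleton_self s)
    rw [h, mul_comm] at hxK
    obtain ⟨z, hz, hzx⟩ := Ideal.mem_span_singleton_mul.mp hxK
    have h0 : (z - x) * s = 0 := by
      have hzs : z * s = x * s := by rw [mul_comm z s, hzx]
      rw [sub_mul, hzs, sub_self]
    have : z = x := sub_eq_zero.mp (hs.2 (z - x) h0)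
    exact this ▸ hz
  exact le_antisymm (key h) (key h.symm)

/-- Let `γ : B → B'` and `I ⊆ B`, `J ⊆ B'` ideals with `γ(I)B'` a reduction of `J`, and let
`X'` be the blow up of `Spec B'` at `J`.  Then `γ(I)·𝒪_{X'} = J·𝒪_{X'}`; in particular
`γ(I)·𝒪_{X'}` is an invertible sheaf of ideals on `X'`. -/
theorem pulled_ideal_of_reduction_eq_on_blowup
    (B B' : CommRingCat) (γ : B ⟶ B') (I : Ideal B) (J : Ideal B')
    (hred : ∃ n : ℕ, I.map (γ.hom : B →+* B') * J ^ n = J ^ (n + 1))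
    (X' : Scheme) (π' : X' ⟶ Spec B') (hX' : IsBlowUp B' J π') :
    (∀ y : X', pulledIdealAt B' (I.map (γ.hom : B →+* B')) π' y = pulledIdealAt B' J π' y)
      ∧ IsInvertiblePulledIdeal B' (I.map (γ.hom : B →+* B')) π' := by
  obtain ⟨n, hn⟩ := hred
  have hmain : ∀ y : X', pulledIdealAt B' (I.map (γ.hom : B →+* B')) π' y
      = pulledIdealAt B' J π' y := by
    intro y
    obtain ⟨a, ha, hand⟩ := hX'.1 y
    set φ : B' →+* (X'.presheaf.stalk y) :=
      ((Scheme.ΓSpecIso B').inv ≫ π'.appTop ≫ X'.presheaf.germ ⊤ y (Opens.mem_top y) :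
        B' ⟶ X'.presheaf.stalk y).hom with hφ
    have hmap := congrArg (Ideal.map φ) hn
    rw [Ideal.map_mul, Ideal.map_pow, Ideal.map_pow] at hmap
    have hJ : Ideal.map φ J = Ideal.span {a} := ha
    rw [hJ, Ideal.span_singleton_pow, Ideal.span_singleton_pow, pow_succ',
      ← Ideal.span_singleton_mul_span_singleton] at hmap
    have hcancel := ideal_cancel_span_singleton (pow_mem hand n)
      (K := Ideal.map φ (I.map (γ.hom : B →+* B'))) (L := Ideal.span {a}) hmap
    show Ideal.map φ (I.map (γ.hom : B →+* B')) = Ideal.map φ J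
    rw [hcancel, hJ]
  refine ⟨hmain, fun y => ?_⟩
  obtain ⟨a, ha, hand⟩ := hX'.1 y
  exact ⟨a, (hmain y).trans ha, hand⟩
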